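/- The equation x^2 = 1 has finite satisfiability gap 1/4: for every finite group G, either every element of G squares to the identity, or the proportion of x ∈ G with x^2 = 1 is at most 3/4. -/
import Mathlib

lemma halfSubgroupTop {G : Type*} [Group G] [Finite G] (H : Subgroup G)
    (h : Nat.card G < 2 * Nat.card H) : H = ⊤ := by
  apply Subgroup.eq_top_of_card_eq
  obtain ⟨k, hk⟩ := Subgroup.card_subgroup_dvd_card H
  have hpos : 0 < Nat.card G := Nat.card_pos
  rcases Nat.lt_or_ge k 2 with hk2 | hk2
  · interval_cases k <;> omega
  · nlinarith [Nat.card_pos (α := H)]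

theorem stmt_2 {G : Type*} [Group G] [Finite G] :
    (∀ x : G, x ^ 2 = 1) ∨ 4 * Nat.card {x : G // x ^ 2 = 1} ≤ 3 * Nat.card G := by
  classical
  have : Fintype G := Fintype.ofFinite G
  by_cases hle : 4 * Nat.card {x : G // x ^ 2 = 1} ≤ 3 * Nat.card G
  · exact Or.inr hle
  left
  push_neg at hle
  set S : Finset G := Finset.univ.filter (fun x => x ^ 2 = 1) with hS
  have hScard : Nat.card {x : G // x ^ 2 = 1} = S.card := by
    rw [Nat.card_eq_fintype_card, Fintype.card_subtype]
  have hGcard : Nat.card G = Fintype.card G := Nat.card_eq_fintype_card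
  have hmemS : ∀ x : G, x ∈ S ↔ x ^ 2 = 1 := by
    intro x; simp [hS]
  have hlt : 3 * Fintype.card G < 4 * S.card := by omega
  -- every element of S is central
  have hcen : ∀ a : G, a ^ 2 = 1 → a ∈ Subgroup.center G := by
    intro a ha
    set C := Subgroup.centralizer ({a} : Set G) with hC
    have hsub : S ∩ S.image (a * ·) ⊆ Finset.univ.filter (fun x => x ∈ C) := by
      intro x hx
      rw [Finset.mem_inter] at hx
      obtain ⟨hx1, hx2⟩ := hx
      rw [Finset.mem_image] at hx2
      obtain ⟨s, hs, rfl⟩ := hx2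
      rw [hmemS] at hx1 hs
      simp only [Finset.mem_filter, Finset.mem_univ, true_and, hC,
        Subgroup.mem_centralizer_singleton_iff]
      -- a^2=1, s^2=1, (a*s)^2=1 ⊢ (a*s)*a = a*(a*s)
      have h1 : a * s * (a * s) = 1 := by rw [← sq]; exact hx1
      have h2 : s * s = 1 := by rw [← sq]; exact hs
      have h3 : a * a = 1 := by rw [← sq]; exact ha
      have key : a * s * a = s := by
        calc a * s * a = a * s * a * (s * s) := by rw [h2, mul_one]
          _ = (a * s * (a * s)) * s := by simp [mul_assoc]
          _ = s := by rw [h1, one_mul]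
      calc a * s * a = s := key
        _ = 1 * s := (one_mul s).symm
        _ = a * a * s := by rw [h3]
        _ = a * (a * s) := by rw [mul_assoc]
    have hcard : S.card + S.card ≤ (S ∩ S.image (a * ·)).card + Fintype.card G := by
      have h1 : (S.image (a * ·)).card = S.card :=
        Finset.card_image_of_injective _ (mul_right_injective a)
      have h2 := Finset.card_inter_add_card_union S (S.image (a * ·))
      have h3 : (S ∪ S.image (a * ·)).card ≤ Fintype.card G := Finset.card_le_univ _
      omega
    have hCcard : (Finset.univ.filter (fun x => x ∈ C)).card ≤ Nat.card C := by
      rw [Nat.card_eq_fintype_card, Fintype.card_subtype]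
    have hCbig : Nat.card G < 2 * Nat.card C := by
      have := Finset.card_le_card hsub
      omega
    have : C = ⊤ := halfSubgroupTop C hCbig
    rw [Subgroup.mem_center_iff]
    intro g
    have hg : g ∈ C := this ▸ Subgroup.mem_top g
    rw [hC, Subgroup.mem_centralizer_singleton_iff] at hg
    exact hg
  -- center is everything
  have hZ : Subgroup.center G = ⊤ := by
    apply halfSubgroupTop
    have hsub : S ⊆ Finset.univ.filter (fun x => x ∈ Subgroup.center G) := by
      intro x hx
      rw [hmemS] at hx
      simp only [Finset.mem_filter, Finset.mem_univ, true_and]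
      exact hcen x hx
    have hZcard : (Finset.univ.filter (fun x => x ∈ Subgroup.center G)).card
        ≤ Nat.card (Subgroup.center G) := by
      rw [Nat.card_eq_fintype_card, Fintype.card_subtype]
    have := Finset.card_le_card hsub
    omega
  have hcomm : ∀ a b : G, a * b = b * a := by
    intro a b
    have : a ∈ Subgroup.center G := hZ ▸ Subgroup.mem_top a
    exact (Subgroup.mem_center_iff.mp this b).symm
  -- S is a subgroup
  set H : Subgroup G :=
    { carrier := {x : G | x ^ 2 = 1}
      one_mem' := by simp
      mul_mem' := by
        intro x y hx hy
        simp only [Set.mem_setOf_eq] at *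
        have h1 : x * x = 1 := by rw [← sq]; exact hx
        have h2 : y * y = 1 := by rw [← sq]; exact hy
        have : x * y * (x * y) = 1 := by
          calc x * y * (x * y) = x * (y * x) * y := by group
            _ = x * (x * y) * y := by rw [hcomm y x]
            _ = (x * x) * (y * y) := by group
            _ = 1 := by rw [h1, h2, mul_one]
        rw [sq]; exact this
      inv_mem' := by
        intro x hx
        simp only [Set.mem_setOf_eq] at *
        rw [inv_pow, hx, inv_one] } with hH
  have hHmem : ∀ x : G, x ∈ H ↔ x ^ 2 = 1 := fun x => Iff.rfl
  have hHcard : Nat.card {x : G // x ^ 2 = 1} = Nat.card H :=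
    Nat.card_congr (Equiv.subtypeEquivRight (fun x => (hHmem x).symm))
  have hHtop : H = ⊤ := by
    apply halfSubgroupTop
    omega
  intro x
  exact (hHmem x).mp (hHtop ▸ Subgroup.mem_top x)
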